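/- Let Ω ⊆ ℝ^N be open, E a Banach space, and Λ as in the standing hypotheses, admitting a Λ-invariant exhaustion (Ωₙ). Let the kernel k satisfy conditions (k1) and (k2), and let V(w)(x) := ∫_{Λ(x)} k(x,y) w(y) dy. If w_k, w ∈ L¹_loc(Ω,E) and for every compact K ⊆ Ω one has ∫_K |w_k(y) − w(y)| dy → 0, then V(w_k) → V(w) uniformly on every compact subset of Ω. -/

import Mathlib

open MeasureTheory Set Filter Bornology

set_option maxHeartbeats 1000000 in
/-- continuity of the Volterra operator `V` from `L¹_loc(Ω,E)` to
`C(Ω,E)`: under the standing hypotheses on `Λ` and (k1)-(k2), if `∫_K ‖wⱼ − w₀‖ → 0`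
for every compact `K ⊆ Ω`, then `V(wⱼ) → V(w₀)` uniformly on compact subsets of `Ω`. -/
theorem stmt_9
    (N : ℕ) {E : Type*} [NormedAddCommGroup E] [NormedSpace ℝ E] [CompleteSpace E]
    (Ω : Set (Fin N → ℝ)) (hΩ : IsOpen Ω)
    (Λ : (Fin N → ℝ) → Set (Fin N → ℝ))
    (hΛsub : ∀ x ∈ Ω, Λ x ⊆ Ω)
    (hΛmeas : ∀ x ∈ Ω, MeasurableSet (Λ x))
    (hΛρ : ∀ x₀ ∈ Ω, Tendsto (fun x => volume (symmDiff (Λ x) (Λ x₀)))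
      (nhdsWithin x₀ Ω) (nhds 0))
    (hΛbdd : ∀ S ⊆ Ω, IsBounded S →
      IsCompact (closure (⋃ x ∈ S, Λ x)) ∧ closure (⋃ x ∈ S, Λ x) ⊆ Ω)
    -- a Λ-invariant exhaustion (Ωₙ)
    (Ωseq : ℕ → Set (Fin N → ℝ))
    (hOopen : ∀ n, IsOpen (Ωseq n)) (hObdd : ∀ n, IsBounded (Ωseq n))
    (hOsub : ∀ n, closure (Ωseq n) ⊆ Ω) (hOmono : ∀ n, Ωseq n ⊆ Ωseq (n + 1))
    (hOcover : Ω ⊆ ⋃ n, Ωseq n)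
    (hOinv : ∀ n, ∀ x ∈ Ωseq n, Λ x ⊆ Ωseq n)
    -- the kernel k with conditions (k1)-(k2)
    (k : (Fin N → ℝ) → (Fin N → ℝ) → (E →L[ℝ] E))
    (hk1 : ∀ x ∈ Ω, AEStronglyMeasurable (k x) (volume.restrict (Λ x)) ∧
      eLpNorm (k x) ⊤ (volume.restrict (Λ x)) < ⊤)
    (hk2 : ∀ C ⊆ Ω, IsCompact C → ∀ x₀ ∈ Ω,
      Tendsto (fun x => eLpNorm
          (fun y => (Λ x).indicator (k x) y - (Λ x₀).indicator (k x₀) y)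
          ⊤ (volume.restrict C))
        (nhdsWithin x₀ Ω) (nhds 0))
    -- the sequence wⱼ and its limit w₀ in L¹_loc(Ω,E)
    (w : ℕ → (Fin N → ℝ) → E) (w₀ : (Fin N → ℝ) → E)
    (hwmeas : ∀ j, StronglyMeasurable (w j)) (hw₀meas : StronglyMeasurable w₀)
    (hwloc : ∀ j, ∀ K ⊆ Ω, IsCompact K → IntegrableOn (w j) K)
    (hw₀loc : ∀ K ⊆ Ω, IsCompact K → IntegrableOn w₀ K)
    -- wⱼ → w₀ in L¹_loc : ∫_K |wⱼ − w₀| → 0 for every compact K ⊆ Ω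
    (hconv : ∀ K ⊆ Ω, IsCompact K →
      Tendsto (fun j => ∫ y in K, ‖w j y - w₀ y‖) atTop (nhds 0)) :
    -- conclusion: V(wⱼ) → V(w₀) uniformly on every compact subset of Ω
    ∀ K ⊆ Ω, IsCompact K →
      TendstoUniformlyOn (fun j x => ∫ y in Λ x, (k x y) (w j y))
        (fun x => ∫ y in Λ x, (k x y) (w₀ y)) atTop K := by

  intro K hKΩ hKc
  set C := closure (⋃ x ∈ K, Λ x) with hC
  obtain ⟨hCcomp, hCΩ⟩ := hΛbdd K hKΩ hKc.isBounded
  have hΛC : ∀ x ∈ K, Λ x ⊆ C := fun x hx =>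
    (subset_iUnion₂ (s := fun x _ => Λ x) x hx).trans subset_closure
  set g : (Fin N → ℝ) → (Fin N → ℝ) → (E →L[ℝ] E) := fun x => (Λ x).indicator (k x) with hg
  have hgmeas : ∀ x ∈ Ω, AEStronglyMeasurable (g x) volume := fun x hx =>
    (aestronglyMeasurable_indicator_iff (hΛmeas x hx)).2 (hk1 x hx).1
  have hgfin : ∀ x ∈ Ω, eLpNorm (g x) ⊤ volume < ⊤ := fun x hx => by
    rw [hg]; dsimp only; rw [eLpNorm_indicator_eq_eLpNorm_restrict (ε := E →L[ℝ] E) (hΛmeas x hx)]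
    exact (hk1 x hx).2
  have hgr : ∀ x ∈ Ω, AEStronglyMeasurable (g x) (volume.restrict C) := fun x hx =>
    (hgmeas x hx).restrict
  -- uniform bound on the kernel over K
  obtain ⟨M, hMfin, hM⟩ : ∃ M : ENNReal, M < ⊤ ∧ ∀ x ∈ K,
      eLpNorm (g x) ⊤ (volume.restrict C) ≤ M := by
    have hU : ∀ x₀ ∈ K, {x | eLpNorm (fun y => g x y - g x₀ y) ⊤ (volume.restrict C) < 1}
        ∈ nhds x₀ := by
      intro x₀ hx₀
      have h2 := hk2 C hCΩ hCcomp x₀ (hKΩ hx₀)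
      rw [nhdsWithin_eq_nhds.2 (hΩ.mem_nhds (hKΩ hx₀))] at h2
      exact h2 (Iio_mem_nhds (by norm_num))
    obtain ⟨t, htK, htcov⟩ := hKc.elim_nhds_subcover
      (fun x₀ => {x | eLpNorm (fun y => g x y - g x₀ y) ⊤ (volume.restrict C) < 1}) hU
    refine ⟨t.sup (fun x₀ => eLpNorm (g x₀) ⊤ (volume.restrict C) + 1), ?_, ?_⟩
    · refine (Finset.sup_lt_iff (by simp)).2 fun x₀ hx₀ => ?_
      have : eLpNorm (g x₀) ⊤ (volume.restrict C) < ⊤ :=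
        lt_of_le_of_lt (eLpNorm_mono_measure _ Measure.restrict_le_self)
          (hgfin x₀ (hKΩ (htK x₀ hx₀)))
      exact ENNReal.add_lt_top.2 ⟨this, by norm_num⟩
    · intro x hx
      obtain ⟨x₀, hx₀t, hx₀⟩ := mem_iUnion₂.1 (htcov hx)
      have hx₀' : eLpNorm (fun y => g x y - g x₀ y) ⊤ (volume.restrict C) < 1 := hx₀
      calc eLpNorm (g x) ⊤ (volume.restrict C)
          ≤ eLpNorm (fun y => g x y - g x₀ y) ⊤ (volume.restrict C)
            + eLpNorm (g x₀) ⊤ (volume.restrict C) := by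
            have h1 := eLpNorm_add_le (μ := volume.restrict C) (p := ⊤)
              (f := fun y => g x y - g x₀ y) (g := g x₀)
              ((hgr x (hKΩ hx)).sub (hgr x₀ (hKΩ (htK x₀ hx₀t))))
              (hgr x₀ (hKΩ (htK x₀ hx₀t))) le_top
            have h2 : (fun y => g x y - g x₀ y) + g x₀ = g x := by funext y; simp
            rwa [h2] at h1
        _ ≤ eLpNorm (g x₀) ⊤ (volume.restrict C) + 1 := by
            rw [add_comm]; exact add_le_add le_rfl hx₀'.le
        _ ≤ _ := Finset.le_sup (f := fun x₀ => eLpNorm (g x₀) ⊤ (volume.restrict C) + 1) hx₀t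
  set Mr : ℝ := M.toReal with hMr
  have hMr0 : 0 ≤ Mr := ENNReal.toReal_nonneg
  -- a.e. bound on k x over Λ x, for x ∈ K
  have hker : ∀ x ∈ K, ∀ᵐ y ∂(volume.restrict (Λ x)), ‖k x y‖ ≤ Mr := by
    intro x hx
    have h1 : ∀ᵐ y ∂(volume.restrict C), ‖g x y‖ ≤ Mr := by
      filter_upwards [ae_le_eLpNormEssSup (f := g x) (μ := volume.restrict C)] with y hy
      have : (‖g x y‖₊ : ENNReal) ≤ M := le_trans hy (by
        rw [← eLpNorm_exponent_top]; exact hM x hx)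
      have := ENNReal.toReal_mono hMfin.ne this
      simpa using this
    have h2 : ∀ᵐ y ∂(volume.restrict (Λ x)), ‖g x y‖ ≤ Mr :=
      ae_mono (Measure.restrict_mono (hΛC x hx) le_rfl) h1
    filter_upwards [h2, ae_restrict_mem (hΛmeas x (hKΩ hx))] with y hy hmem
    have hgy : g x y = k x y := Set.indicator_of_mem hmem _
    rw [← hgy]; exact hy
  -- integrability of the integrand
  have hint : ∀ x ∈ K, ∀ v : (Fin N → ℝ) → E, IntegrableOn v C →
      IntegrableOn (fun y => k x y (v y)) (Λ x) := by
    intro x hx v hv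
    have hvΛ : IntegrableOn v (Λ x) := hv.mono_set (hΛC x hx)
    have hmeas : AEStronglyMeasurable (fun y => k x y (v y)) (volume.restrict (Λ x)) := by
      have := ((hk1 x (hKΩ hx)).1.prodMk hvΛ.aestronglyMeasurable)
      exact isBoundedBilinearMap_apply.continuous.comp_aestronglyMeasurable this
    refine Integrable.mono' (hvΛ.norm.const_mul Mr) hmeas ?_
    filter_upwards [hker x hx] with y hy
    calc ‖k x y (v y)‖ ≤ ‖k x y‖ * ‖v y‖ := (k x y).le_opNorm _
      _ ≤ Mr * ‖v y‖ := mul_le_mul_of_nonneg_right hy (norm_nonneg _)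
  -- the key estimate
  have hbound : ∀ x ∈ K, ∀ v : (Fin N → ℝ) → E, IntegrableOn v C →
      ‖∫ y in Λ x, k x y (v y)‖ ≤ Mr * ∫ y in C, ‖v y‖ := by
    intro x hx v hv
    have hvΛ : IntegrableOn v (Λ x) := hv.mono_set (hΛC x hx)
    calc ‖∫ y in Λ x, k x y (v y)‖ ≤ ∫ y in Λ x, Mr * ‖v y‖ := by
          refine norm_integral_le_of_norm_le (hvΛ.norm.const_mul Mr) ?_
          filter_upwards [hker x hx] with y hy
          calc ‖k x y (v y)‖ ≤ ‖k x y‖ * ‖v y‖ := (k x y).le_opNorm _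
            _ ≤ Mr * ‖v y‖ := mul_le_mul_of_nonneg_right hy (norm_nonneg _)
      _ = Mr * ∫ y in Λ x, ‖v y‖ := integral_const_mul _ _
      _ ≤ Mr * ∫ y in C, ‖v y‖ := by
          refine mul_le_mul_of_nonneg_left ?_ hMr0
          exact setIntegral_mono_set hv.norm
            (Eventually.of_forall fun y => norm_nonneg _)
            (HasSubset.Subset.eventuallyLE (hΛC x hx))
  -- conclusion
  rw [Metric.tendstoUniformlyOn_iff]
  intro ε hε
  have h1 := hconv C hCΩ hCcomp
  have h2 : Tendsto (fun j => Mr * ∫ y in C, ‖w j y - w₀ y‖) atTop (nhds 0) := by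
    simpa using h1.const_mul Mr
  filter_upwards [h2.eventually (gt_mem_nhds hε)] with j hj x hx
  have hwj : IntegrableOn (w j) C := hwloc j C hCΩ hCcomp
  have hw0 : IntegrableOn w₀ C := hw₀loc C hCΩ hCcomp
  have hsub :
      (∫ y in Λ x, k x y (w j y)) - (∫ y in Λ x, k x y (w₀ y))
        = ∫ y in Λ x, k x y (w j y - w₀ y) := by
    rw [← integral_sub (hint x hx (w j) hwj) (hint x hx w₀ hw0)]
    simp
  calc dist (∫ y in Λ x, k x y (w₀ y)) (∫ y in Λ x, k x y (w j y))
      = ‖(∫ y in Λ x, k x y (w j y)) - (∫ y in Λ x, k x y (w₀ y))‖ := by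
        rw [dist_eq_norm, norm_sub_rev]
    _ = ‖∫ y in Λ x, k x y (w j y - w₀ y)‖ := by rw [hsub]
    _ ≤ Mr * ∫ y in C, ‖w j y - w₀ y‖ := hbound x hx _ (hwj.sub hw0)
    _ < ε := hj
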